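/- Let ℓ ≥ 1, k ≥ 2, and let Q = (q_1,…,q_k) be a k-tuple of length-n level-ℓ sequences. Then the maximum, over all k-tuples Φ of permutations of Fin ℓ, of the number of constant cross sections of Φ(Q) equals the maximum cardinality of a set I ⊆ Fin n such that the cross sections of Q at the indices in I are pairwise connected; consequently, the Hamming distance of the k-tuple of patterns (⟦q_1⟧,…,⟦q_k⟧) equals n minus this maximum cardinality. -/

import Mathlib

/-- Two sequences are equivalent if one is obtained from the other by relabeling symbols. -/
def seqSetoid (n ℓ : ℕ) : Setoid (Fin n → Fin ℓ) where
  r q p := ∃ φ : Equiv.Perm (Fin ℓ), ⇑φ ∘ q = p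
  iseqv := by
    constructor
    · intro q; exact ⟨Equiv.refl _, rfl⟩
    · rintro q p ⟨φ, rfl⟩
      exact ⟨φ.symm, by funext i; simp⟩
    · rintro q p r ⟨φ₁, rfl⟩ ⟨φ₂, rfl⟩
      exact ⟨φ₁.trans φ₂, by funext i; simp⟩

/-- The type of length-`n` level-`ℓ` sequence patterns. -/
def SeqPattern (n ℓ : ℕ) : Type := Quotient (seqSetoid n ℓ)

/-- The Hamming distance of a \`k\`-tuple of sequences: the number of indices at which
the values of the sequences are not all equal. -/
noncomputable def tupleDist {n ℓ k : ℕ} (Q : Fin k → Fin n → Fin ℓ) : ℕ :=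
  Nat.card {i : Fin n // ¬ ∀ j j' : Fin k, Q j i = Q j' i}

/-- The Hamming distance of a \`k\`-tuple of sequence patterns: the minimum of the tuple
Hamming distance over all tuples of representatives. -/
noncomputable def patternTupleDist {n ℓ k : ℕ} (T : Fin k → SeqPattern n ℓ) : ℕ :=
  sInf {d | ∃ Q : Fin k → Fin n → Fin ℓ,
    (∀ j, Quotient.mk (seqSetoid n ℓ) (Q j) = T j) ∧ tupleDist Q = d}

/-- The cross section of a \`k\`-tuple of sequences at index \`i\`. -/
def crossSection {n ℓ k : ℕ} (Q : Fin k → Fin n → Fin ℓ) (i : Fin n) : Fin k → Fin ℓ :=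
  fun j => Q j i

/-- Two tuples in \`(Fin ℓ)^k\` are incompatible if they differ in every coordinate. -/
def Incompatible {k ℓ : ℕ} (c c' : Fin k → Fin ℓ) : Prop :=
  ∀ j, c j ≠ c' j

/-- Two tuples in \`(Fin ℓ)^k\` are connected if they are identical or incompatible. -/
def Connected {k ℓ : ℕ} (c c' : Fin k → Fin ℓ) : Prop :=
  c = c' ∨ Incompatible c c'

/-- A tuple in \`(Fin ℓ)^k\` is constant if all its coordinates are equal. -/
def IsConstant {k ℓ : ℕ} (c : Fin k → Fin ℓ) : Prop :=
  ∀ j j' , c j = c j'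


section aux
variable {n ℓ k : ℕ}

/-- Auxiliary: extend a partial relabeling on the indices in `I` to permutations, making
all cross sections at `I` constant. -/
lemma exists_perm_tuple (hk : 0 < k) (Q : Fin k → Fin n → Fin ℓ) (I : Finset (Fin n))
    (hsame : ∀ i ∈ I, ∀ i' ∈ I, ∀ j j' : Fin k, Q j i = Q j i' → Q j' i = Q j' i') :
    ∃ Φ : Fin k → Equiv.Perm (Fin ℓ), ∀ i ∈ I, ∀ j, (Φ j) (Q j i) = Q ⟨0, hk⟩ i := by
  classical
  set z : Fin k := ⟨0, hk⟩
  have main : ∀ j, ∃ φ : Equiv.Perm (Fin ℓ), ∀ i ∈ I, φ (Q j i) = Q z i := by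
    intro j
    set f : Fin ℓ → Fin ℓ := fun x =>
      if h : ∃ i ∈ I, Q j i = x then Q z h.choose else x with hf
    have hfval : ∀ i ∈ I, f (Q j i) = Q z i := by
      intro i hi
      have h : ∃ i' ∈ I, Q j i' = Q j i := ⟨i, hi, rfl⟩
      have hc := h.choose_spec
      simp only [f, dif_pos h]
      exact hsame _ hc.1 _ hi j z hc.2
    have hinj : Set.InjOn f (I.image (fun i => Q j i)) := by
      intro x hx y hy hxy
      simp only [Finset.coe_image, Set.mem_image, Finset.mem_coe] at hx hy
      obtain ⟨i, hi, rfl⟩ := hx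
      obtain ⟨i', hi', rfl⟩ := hy
      rw [hfval i hi, hfval i' hi'] at hxy
      exact hsame _ hi _ hi' z j hxy
    have hcard : Fintype.card (Fin ℓ) = (Finset.univ : Finset (Fin ℓ)).card := by
      simp
    obtain ⟨g, hg⟩ := Finset.exists_equiv_extend_of_card_eq hcard
      (t := Finset.univ) (s := I.image (fun i => Q j i)) (f := f)
      (by intro x _; exact Finset.mem_univ x) hinj
    refine ⟨g.trans (Equiv.subtypeUnivEquiv fun x => Finset.mem_univ x), fun i hi => ?_⟩
    have := hg (Q j i) (Finset.mem_image_of_mem _ hi)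
    simpa [Equiv.subtypeUnivEquiv, this] using hfval i hi
  exact ⟨fun j => (main j).choose, fun i hi j => (main j).choose_spec i hi⟩

end aux

/-- The maximal number of constant cross sections of `Φ(Q)` over all tuples of
permutations `Φ` equals the maximal cardinality of a set of indices whose cross sections
in `Q` are pairwise connected; consequently, the Hamming distance of the tuple of
patterns generated by `Q` is `n` minus this maximal cardinality. -/
theorem patternTupleDist_eq_sub_max_connected (n ℓ k : ℕ) (hℓ : 1 ≤ ℓ) (hk : 2 ≤ k)
    (Q : Fin k → Fin n → Fin ℓ) :
    sSup {s : ℕ | ∃ Φ : Fin k → Equiv.Perm (Fin ℓ),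
        s = Nat.card {i : Fin n // IsConstant (crossSection (fun j => ⇑(Φ j) ∘ Q j) i)}} =
      sSup {s : ℕ | ∃ I : Finset (Fin n),
        (∀ i ∈ I, ∀ i' ∈ I, Connected (crossSection Q i) (crossSection Q i')) ∧
          s = I.card} ∧
      patternTupleDist (fun j => Quotient.mk (seqSetoid n ℓ) (Q j)) =
        n - sSup {s : ℕ | ∃ I : Finset (Fin n),
          (∀ i ∈ I, ∀ i' ∈ I, Connected (crossSection Q i) (crossSection Q i')) ∧
            s = I.card} := by
  classical
  have hk0 : 0 < k := by omega
  set z : Fin k := ⟨0, hk0⟩ with hz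
  set A := {s : ℕ | ∃ Φ : Fin k → Equiv.Perm (Fin ℓ),
      s = Nat.card {i : Fin n // IsConstant (crossSection (fun j => ⇑(Φ j) ∘ Q j) i)}} with hA
  set B := {s : ℕ | ∃ I : Finset (Fin n),
      (∀ i ∈ I, ∀ i' ∈ I, Connected (crossSection Q i) (crossSection Q i')) ∧
        s = I.card} with hB
  have hAne : A.Nonempty := ⟨_, fun _ => Equiv.refl _, rfl⟩
  have hAbdd : BddAbove A := by
    refine ⟨n, fun s hs => ?_⟩
    obtain ⟨Φ, rfl⟩ := hs
    rw [Nat.card_eq_fintype_card]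
    calc Fintype.card _ ≤ Fintype.card (Fin n) := Fintype.card_subtype_le _
    _ = n := Fintype.card_fin n
  have hBne : B.Nonempty := ⟨0, ∅, by simp, by simp⟩
  -- A ⊆ B : the set of constant indices of Φ(Q) is pairwise connected in Q
  have hAB : A ⊆ B := by
    rintro s ⟨Φ, rfl⟩
    set R : Fin k → Fin n → Fin ℓ := fun j => ⇑(Φ j) ∘ Q j with hR
    set P : Fin n → Prop := fun i => IsConstant (crossSection R i) with hP
    refine ⟨Finset.univ.filter P, ?_, ?_⟩
    · intro i hi i' hi'
      rw [Finset.mem_filter] at hi hi'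
      have hci : ∀ j, (Φ j) (Q j i) = (Φ z) (Q z i) := fun j => hi.2 j z
      have hci' : ∀ j, (Φ j) (Q j i') = (Φ z) (Q z i') := fun j => hi'.2 j z
      by_cases hv : (Φ z) (Q z i) = (Φ z) (Q z i')
      · left
        funext j
        exact (Φ j).injective (((hci j).trans hv).trans (hci' j).symm)
      · right
        intro j hne
        exact hv (((hci j).symm.trans (congrArg (Φ j) hne)).trans (hci' j))
    · rw [Nat.card_eq_fintype_card, Fintype.card_subtype]
  -- every element of B is at most some element of A
  have hBA : ∀ s ∈ B, ∃ t ∈ A, s ≤ t := by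
    rintro s ⟨I, hI, rfl⟩
    have hsame : ∀ i ∈ I, ∀ i' ∈ I, ∀ j j' : Fin k, Q j i = Q j i' → Q j' i = Q j' i' := by
      intro i hi i' hi' j j' h
      rcases hI i hi i' hi' with he | hinc
      · exact congrFun he j'
      · exact absurd h (hinc j)
    obtain ⟨Φ, hΦ⟩ := exists_perm_tuple hk0 Q I hsame
    refine ⟨_, ⟨Φ, rfl⟩, ?_⟩
    rw [Nat.card_eq_fintype_card, Fintype.card_subtype]
    apply Finset.card_le_card
    intro i hi
    rw [Finset.mem_filter]
    refine ⟨Finset.mem_univ i, fun j j' => ?_⟩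
    show (Φ j) (Q j i) = (Φ j') (Q j' i)
    rw [hΦ i hi j, hΦ i hi j']
  have h1 : sSup A = sSup B := by
    apply le_antisymm
    · exact csSup_le hAne fun s hs => le_csSup ⟨n, fun t ht => by
        obtain ⟨I, _, rfl⟩ := ht; exact (Finset.card_le_univ I).trans_eq (by simp)⟩ (hAB hs)
    · refine csSup_le hBne fun s hs => ?_
      obtain ⟨t, ht, hst⟩ := hBA s hs
      exact hst.trans (le_csSup hAbdd ht)
  refine ⟨h1, ?_⟩
  rw [← h1]
  -- key computation: tupleDist of Φ(Q) is n minus the number of constant cross sections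
  have hdist : ∀ R : Fin k → Fin n → Fin ℓ,
      tupleDist R = n - Nat.card {i : Fin n // IsConstant (crossSection R i)} := by
    intro R
    rw [tupleDist, Nat.card_eq_fintype_card, Nat.card_eq_fintype_card]
    have h := Fintype.card_subtype_compl (fun i : Fin n => IsConstant (crossSection R i))
    rw [Fintype.card_fin] at h
    convert h using 2
    rfl
  unfold patternTupleDist
  apply le_antisymm
  · -- sInf ≤ n - sSup A
    have hmem : sSup A ∈ A := Nat.sSup_mem hAne hAbdd
    obtain ⟨Φ, hΦ⟩ := hmem
    apply Nat.sInf_le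
    refine ⟨fun j => ⇑(Φ j) ∘ Q j, fun j => Quotient.sound ⟨(Φ j).symm, funext fun x => by simp⟩, ?_⟩
    rw [hdist, ← hΦ]
  · -- n - sSup A ≤ sInf
    refine le_csInf ⟨tupleDist Q, Q, fun j => rfl, rfl⟩ ?_
    rintro d ⟨R, hRQ, rfl⟩
    have hφ : ∀ j, ∃ φ : Equiv.Perm (Fin ℓ), ⇑φ ∘ R j = Q j := fun j => Quotient.exact (hRQ j)
    choose φ hφ using hφ
    have hRe : R = fun j => ⇑(φ j).symm ∘ Q j := by
      funext j x
      have := congrFun (hφ j) x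
      simp only [Function.comp_apply] at this ⊢
      rw [← this, Equiv.symm_apply_apply]
    rw [hdist, hRe]
    exact Nat.sub_le_sub_left (le_csSup hAbdd ⟨fun j => (φ j).symm, rfl⟩) n
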